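/- If the lsc function f : ℝⁿ → ℝ ∪ {∞} is variationally s-convex at x̄ for x̄* ∈ ∂f(x̄), then f is prox-regular at x̄ for x̄* with parameter value r = max{−s, 0}. Conversely, if f is prox-regular at x̄ for x̄* with parameter value r ≥ 0, then f is variationally (−r)-convex at x̄ for x̄*. -/

import Mathlib

open scoped RealInnerProductSpace
open Filter Topology Metric Matrix

noncomputable section

abbrev En (n : ℕ) := EuclideanSpace ℝ (Fin n)

variable {n : ℕ}

/-- The regular (Fréchet) subdifferential of an extended-real-valued function. -/
def FSubdiff (f : En n → EReal) (x : En n) : Set (En n) :=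
  {v | ∀ c : ℝ, 0 < c → ∃ δ > (0:ℝ), ∀ y ∈ ball x δ,
    f x + ((⟪v, y - x⟫ - c * ‖y - x‖ : ℝ) : EReal) ≤ f y}

/-- The limiting (Mordukhovich) subdifferential, via f-attentive convergence. -/
def LSubdiff (f : En n → EReal) (x : En n) : Set (En n) :=
  {v | ∃ xs vs : ℕ → En n, (∀ k, vs k ∈ FSubdiff f (xs k)) ∧
    Tendsto xs atTop (𝓝 x) ∧ Tendsto (fun k => f (xs k)) atTop (𝓝 (f x)) ∧
    Tendsto vs atTop (𝓝 v)}

/-- The graph of the f-attentive ε-localization of the subdifferential around (x̄, x̄*). -/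
def GphT (f : En n → EReal) (xb xbs : En n) (ε : ℝ) : Set (En n × En n) :=
  {p | p.2 ∈ LSubdiff f p.1 ∧ f p.1 < f xb + (ε : EReal) ∧
       p.1 ∈ ball xb ε ∧ p.2 ∈ ball xbs ε}

/-- Prox-regularity of f at x̄ for x̄* with parameters r ≥ 0 and ε > 0. -/
def ProxReg (f : En n → EReal) (xb xbs : En n) (r ε : ℝ) : Prop :=
  (∃ a : ℝ, f xb = (a : EReal)) ∧ xbs ∈ LSubdiff f xb ∧ 0 ≤ r ∧ 0 < ε ∧
  ∀ x' ∈ ball xb ε, ∀ p ∈ GphT f xb xbs ε,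
    f p.1 + ((⟪p.2, x' - p.1⟫ - r / 2 * ‖x' - p.1‖ ^ 2 : ℝ) : EReal) ≤ f x'

/-- Variational s-convexity of f at x̄ for x̄*. -/
def VarConv (f : En n → EReal) (s : ℝ) (xb xbs : En n) : Prop :=
  (∃ a : ℝ, f xb = (a : EReal)) ∧ xbs ∈ LSubdiff f xb ∧
  ∃ (U V : Set (En n)) (fh : En n → EReal) (ρ : ℝ),
    IsOpen U ∧ Convex ℝ U ∧ xb ∈ U ∧ IsOpen V ∧ Convex ℝ V ∧ xbs ∈ V ∧
    LowerSemicontinuous fh ∧ f xb < (ρ : EReal) ∧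
    -- fh - (s/2)‖·‖² is convex on U
    (∀ x ∈ U, ∀ y ∈ U, ∀ a b : ℝ, 0 ≤ a → 0 ≤ b → a + b = 1 →
      fh (a • x + b • y) +
        ((s / 2 * (a * ‖x‖ ^ 2 + b * ‖y‖ ^ 2 - ‖a • x + b • y‖ ^ 2) : ℝ) : EReal)
        ≤ (a : EReal) * fh x + (b : EReal) * fh y) ∧
    (∀ x ∈ U, fh x ≤ f x) ∧
    ({p : En n × En n | p.2 ∈ LSubdiff f p.1 ∧ f p.1 < (ρ : EReal)} ∩ U ×ˢ V
      = {p : En n × En n | p.2 ∈ LSubdiff fh p.1} ∩ U ×ˢ V) ∧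
    (∀ p ∈ {p : En n × En n | p.2 ∈ LSubdiff f p.1 ∧ f p.1 < (ρ : EReal)} ∩ U ×ˢ V,
      f p.1 = fh p.1)

-- helper 1: quadratic identity
lemma sq_mix_identity (z y : En n) (a b : ℝ) (hab : a + b = 1) :
    a * ‖z‖ ^ 2 + b * ‖y‖ ^ 2 - ‖a • z + b • y‖ ^ 2 = a * b * ‖y - z‖ ^ 2 := by
  have e1 : ‖a • z + b • y‖ ^ 2 = a*a*‖z‖^2 + 2*(a*b)*⟪z,y⟫ + b*b*‖y‖^2 := by
    rw [← real_inner_self_eq_norm_sq]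
    simp only [inner_add_add_self, real_inner_smul_left, real_inner_smul_right,
      real_inner_self_eq_norm_sq, norm_smul, Real.norm_eq_abs, mul_pow, sq_abs]
    rw [real_inner_comm y z]; ring
  have e2 : ‖y - z‖ ^ 2 = ‖y‖^2 - 2*⟪z,y⟫ + ‖z‖^2 := by
    rw [norm_sub_sq_real, real_inner_comm y z]
  have hb : b = 1 - a := by linarith
  subst hb; rw [e1, e2]; ring

-- helper 2 : Fréchet ⊆ limiting
lemma fsub_subset_lsub (f : En n → EReal) (x : En n) : FSubdiff f x ⊆ LSubdiff f x := by
  intro v hv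
  exact ⟨fun _ => x, fun _ => v, fun _ => hv, tendsto_const_nhds, tendsto_const_nhds,
    tendsto_const_nhds⟩

-- helper 3 : lsc min on compact
lemma lsc_exists_min (φ : En n → EReal) (hφ : LowerSemicontinuous φ) (K : Set (En n))
    (hK : IsCompact K) (hne : K.Nonempty) : ∃ y₀ ∈ K, ∀ y ∈ K, φ y₀ ≤ φ y := by
  have hKc : IsClosed K := hK.isClosed
  set Z : K → Set (En n) := fun y => {z | z ∈ K ∧ φ z ≤ φ y} with hZ
  have hZc : ∀ y : K, IsClosed (Z y) := by
    intro y
    exact hKc.inter (hφ.isClosed_preimage (φ y))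
  have hZn : ∀ y : K, (Z y).Nonempty := fun y => ⟨y, y.2, le_refl _⟩
  have hZcm : ∀ y : K, IsCompact (Z y) := fun y =>
    hK.of_isClosed_subset (hZc y) (fun z hz => hz.1)
  have hdir : Directed (· ⊇ ·) Z := by
    intro i j
    rcases le_total (φ i) (φ j) with h | h
    · exact ⟨i, fun z hz => hz, fun z hz => ⟨hz.1, hz.2.trans h⟩⟩
    · exact ⟨j, fun z hz => ⟨hz.1, hz.2.trans h⟩, fun z hz => hz⟩
  have : Nonempty K := hne.to_subtype
  obtain ⟨y₀, hy₀⟩ := IsCompact.nonempty_iInter_of_directed_nonempty_isCompact_isClosed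
    Z hdir hZn hZcm hZc
  simp only [Set.mem_iInter] at hy₀
  obtain ⟨y, hy⟩ := hne
  refine ⟨y₀, (hy₀ ⟨y, hy⟩).1, fun z hz => (hy₀ ⟨z, hz⟩).2⟩

-- Key lemma, Fréchet case
lemma frechet_global (fh : En n → EReal) (s : ℝ) (U : Set (En n)) (hUc : Convex ℝ U)
    (hconv : ∀ x ∈ U, ∀ y ∈ U, ∀ a b : ℝ, 0 ≤ a → 0 ≤ b → a + b = 1 →
      fh (a • x + b • y) +
        ((s / 2 * (a * ‖x‖ ^ 2 + b * ‖y‖ ^ 2 - ‖a • x + b • y‖ ^ 2) : ℝ) : EReal)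
        ≤ (a : EReal) * fh x + (b : EReal) * fh y)
    (z : En n) (hz : z ∈ U) (c : ℝ) (hc : fh z = (c : EReal))
    (w : En n) (hw : w ∈ FSubdiff fh z) (y : En n) (hy : y ∈ U) :
    ((c + ⟪w, y - z⟫ + s / 2 * ‖y - z‖ ^ 2 : ℝ) : EReal) ≤ fh y := by
  rcases eq_or_ne y z with rfl | hyz
  · simp [hc]
  have hR : (0:ℝ) < ‖y - z‖ := by
    rw [norm_pos_iff]; exact sub_ne_zero_of_ne hyz
  set R := ‖y - z‖ with hRdef
  -- basic step, for given c', δ from the Fréchet property, and suitable t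
  have key : ∀ c' δ : ℝ,
      (∀ y' ∈ ball z δ, fh z + ((⟪w, y' - z⟫ - c' * ‖y' - z‖ : ℝ) : EReal) ≤ fh y') →
      ∀ t : ℝ, 0 < t → t < 1 → t * R < δ →
      ((c + t * ⟪w, y - z⟫ - c' * (t * R) + s / 2 * ((1 - t) * t * R ^ 2) : ℝ) : EReal)
        ≤ ((1 - t) : EReal) * (c : EReal) + (t : EReal) * fh y := by
    intro c' δ hδp t ht0 ht1 htδ
    set zt := (1 - t) • z + t • y with hzt
    have hztU : zt ∈ U := hUc hz hy (by linarith) (le_of_lt ht0) (by ring)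
    have hztz : zt - z = t • (y - z) := by
      simp only [hzt]; module
    have hnzt : ‖zt - z‖ = t * R := by
      rw [hztz, norm_smul, Real.norm_eq_abs, abs_of_pos ht0]
    have hball : zt ∈ ball z δ := by
      rw [mem_ball_iff_norm, hnzt]; exact htδ
    have e : (⟪w, zt - z⟫ - c' * ‖zt - z‖ : ℝ) = t * ⟪w, y - z⟫ - c' * (t * R) := by
      rw [hnzt, hztz, inner_smul_right]
    have h1 : ((c + (t * ⟪w, y - z⟫ - c' * (t * R)) : ℝ) : EReal) ≤ fh zt := by
      have h := hδp zt hball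
      rw [hc, e] at h
      rwa [EReal.coe_add]
    have h2 := hconv z hz y hy (1 - t) t (by linarith) (le_of_lt ht0) (by ring)
    rw [sq_mix_identity z y (1-t) t (by ring), hc] at h2
    calc ((c + t * ⟪w, y - z⟫ - c' * (t * R) + s / 2 * ((1 - t) * t * R ^ 2) : ℝ) : EReal)
        = ((c + (t * ⟪w, y - z⟫ - c' * (t * R)) : ℝ) : EReal)
          + ((s / 2 * ((1 - t) * t * R ^ 2) : ℝ) : EReal) := by
          rw [← EReal.coe_add]; norm_cast; ring
      _ ≤ fh zt + ((s / 2 * ((1 - t) * t * R ^ 2) : ℝ) : EReal) := add_le_add h1 le_rfl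
      _ ≤ ((1 - t) : EReal) * (c : EReal) + (t : EReal) * fh y := h2
  -- rule out fh y = ⊥
  have hybot : fh y ≠ ⊥ := by
    intro hbot
    obtain ⟨δ, hδ0, hδp⟩ := hw 1 one_pos
    set t : ℝ := min (1/2) (δ / (2 * R)) with htdef
    have ht0 : 0 < t := lt_min (by norm_num) (by positivity)
    have ht1 : t < 1 := lt_of_le_of_lt (min_le_left _ _) (by norm_num)
    have htδ : t * R < δ := by
      have h1 : t ≤ δ / (2 * R) := min_le_right _ _
      have h2 : t * R ≤ δ / (2 * R) * R := mul_le_mul_of_nonneg_right h1 hR.le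
      have h3 : δ / (2 * R) * R = δ / 2 := by field_simp
      linarith
    have h := key 1 δ hδp t ht0 ht1 htδ
    rw [hbot] at h
    have : (t : EReal) * (⊥ : EReal) = ⊥ := by
      rw [EReal.mul_bot_of_pos]; exact_mod_cast ht0
    rw [this, EReal.add_bot] at h
    exact absurd (le_bot_iff.mp h) (EReal.coe_ne_bot _)
  rcases eq_or_ne (fh y) ⊤ with htop | htop
  · rw [htop]; exact le_top
  set d := (fh y).toReal with hd
  have hfy : fh y = (d : EReal) := (EReal.coe_toReal htop hybot).symm
  rw [hfy, EReal.coe_le_coe_iff]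
  -- now a real inequality; prove by approximation
  refine le_of_forall_pos_le_add ?_
  intro η hη
  set c' : ℝ := η / (2 * R) with hc'def
  have hc' : 0 < c' := by positivity
  obtain ⟨δ, hδ0, hδp⟩ := hw c' hc'
  set t : ℝ := min (1/2) (min (δ / (2 * R)) (η / (1 + |s| * R ^ 2))) with htdef
  have ht0 : 0 < t := by
    refine lt_min (by norm_num) (lt_min (by positivity) (by positivity))
  have ht1 : t < 1 := lt_of_le_of_lt (min_le_left _ _) (by norm_num)
  have htδ : t * R < δ := by
    have h1 : t ≤ δ / (2 * R) := le_trans (min_le_right _ _) (min_le_left _ _)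
    have h2 : t * R ≤ δ / (2 * R) * R := mul_le_mul_of_nonneg_right h1 hR.le
    have h3 : δ / (2 * R) * R = δ / 2 := by field_simp
    linarith
  have hts : |s| * (t * R ^ 2) ≤ η := by
    have h1 : t ≤ η / (1 + |s| * R ^ 2) := le_trans (min_le_right _ _) (min_le_right _ _)
    have hpos : (0:ℝ) < 1 + |s| * R ^ 2 := by positivity
    have : t * (1 + |s| * R ^ 2) ≤ η := by
      rw [← le_div_iff₀ hpos]; exact h1
    nlinarith [mul_nonneg (abs_nonneg s) (sq_nonneg R), ht0.le]
  have h := key c' δ hδp t ht0 ht1 htδ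
  rw [hfy] at h
  have h' : c + t * ⟪w, y - z⟫ - c' * (t * R) + s / 2 * ((1 - t) * t * R ^ 2)
      ≤ (1 - t) * c + t * d := by exact_mod_cast h
  have hc'tR : c' * (t * R) = t * (η / 2) := by
    rw [hc'def]; field_simp
  rw [hc'tR] at h'
  have hmul : t * (c + ⟪w, y - z⟫ - η / 2 + s / 2 * ((1 - t) * R ^ 2)) ≤ t * d := by
    linear_combination h'
  have hdiv : c + ⟪w, y - z⟫ - η / 2 + s / 2 * ((1 - t) * R ^ 2) ≤ d :=
    le_of_mul_le_mul_left hmul ht0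
  have habs : s * (t * R ^ 2) ≤ |s| * (t * R ^ 2) := by
    apply mul_le_mul_of_nonneg_right (le_abs_self s); positivity
  nlinarith [hdiv, hts, habs]

-- Key lemma, limiting case
lemma lsub_global (fh : En n → EReal) (s : ℝ) (U : Set (En n)) (hUo : IsOpen U)
    (hUc : Convex ℝ U)
    (hconv : ∀ x ∈ U, ∀ y ∈ U, ∀ a b : ℝ, 0 ≤ a → 0 ≤ b → a + b = 1 →
      fh (a • x + b • y) +
        ((s / 2 * (a * ‖x‖ ^ 2 + b * ‖y‖ ^ 2 - ‖a • x + b • y‖ ^ 2) : ℝ) : EReal)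
        ≤ (a : EReal) * fh x + (b : EReal) * fh y)
    (x : En n) (hx : x ∈ U) (b : ℝ) (hb : fh x = (b : EReal))
    (v : En n) (hv : v ∈ LSubdiff fh x) (y : En n) (hy : y ∈ U) :
    ((b + ⟪v, y - x⟫ + s / 2 * ‖y - x‖ ^ 2 : ℝ) : EReal) ≤ fh y := by
  obtain ⟨xs, vs, hF, hxs, hfs, hvs⟩ := hv
  rw [hb] at hfs
  have hU' : ∀ᶠ k in atTop, xs k ∈ U := hxs.eventually (hUo.mem_nhds hx)
  have hlt : ∀ᶠ k in atTop, fh (xs k) < ((b + 1 : ℝ) : EReal) :=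
    hfs.eventually_lt_const (by exact_mod_cast (lt_add_one b))
  have hgt : ∀ᶠ k in atTop, ((b - 1 : ℝ) : EReal) < fh (xs k) :=
    hfs.eventually_const_lt (by exact_mod_cast (sub_one_lt b))
  set ck : ℕ → ℝ := fun k => (fh (xs k)).toReal with hck
  have hfin : ∀ᶠ k in atTop, fh (xs k) = ((ck k : ℝ) : EReal) := by
    filter_upwards [hlt, hgt] with k h1 h2
    exact (EReal.coe_toReal (ne_top_of_lt h1) (ne_bot_of_gt h2)).symm
  have hckt : Tendsto ck atTop (𝓝 b) := by
    have hcont := (EReal.tendsto_toReal (a := (b : EReal))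
      (EReal.coe_ne_top b) (EReal.coe_ne_bot b)).comp hfs
    exact (by simpa using hcont : Tendsto (EReal.toReal ∘ fun k => fh (xs k)) atTop (𝓝 b))
  have hineq : ∀ᶠ k in atTop,
      ((ck k + ⟪vs k, y - xs k⟫ + s / 2 * ‖y - xs k‖ ^ 2 : ℝ) : EReal) ≤ fh y := by
    filter_upwards [hU', hfin] with k h1 h2
    exact frechet_global fh s U hUc hconv (xs k) h1 (ck k) h2 (vs k) (hF k) y hy
  have hL : Tendsto (fun k => (ck k + ⟪vs k, y - xs k⟫ + s / 2 * ‖y - xs k‖ ^ 2 : ℝ))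
      atTop (𝓝 (b + ⟪v, y - x⟫ + s / 2 * ‖y - x‖ ^ 2)) := by
    refine Tendsto.add (Tendsto.add hckt ?_) ?_
    · exact hvs.inner (tendsto_const_nhds.sub hxs)
    · exact (tendsto_const_nhds.sub hxs).norm.pow 2 |>.const_mul (s/2)
  have hLE : Tendsto (fun k =>
      ((ck k + ⟪vs k, y - xs k⟫ + s / 2 * ‖y - xs k‖ ^ 2 : ℝ) : EReal)) atTop
      (𝓝 ((b + ⟪v, y - x⟫ + s / 2 * ‖y - x‖ ^ 2 : ℝ) : EReal)) := by
    exact (EReal.tendsto_coe).mpr hL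
  exact le_of_tendsto hLE hineq

lemma dir1 (f : En n → EReal) (xb xbs : En n) (s : ℝ) (h : VarConv f s xb xbs) :
    ∃ ε > (0:ℝ), ProxReg f xb xbs (max (-s) 0) ε := by
  obtain ⟨⟨a, ha⟩, hsub, U, V, fh, ρ, hUo, hUc, hxbU, hVo, hVc, hxbsV, hlsc, hρ,
    hconv, hle, hgraph, heq⟩ := h
  have haρ : a < ρ := by rw [ha] at hρ; exact_mod_cast hρ
  obtain ⟨εU, hεU, hUb⟩ := Metric.isOpen_iff.mp hUo xb hxbU
  obtain ⟨εV, hεV, hVb⟩ := Metric.isOpen_iff.mp hVo xbs hxbsV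
  set ε := min εU (min εV (ρ - a)) with hεdef
  have hε : 0 < ε := lt_min hεU (lt_min hεV (by linarith))
  have ballU : ball xb ε ⊆ U := (ball_subset_ball (min_le_left _ _)).trans hUb
  have ballV : ball xbs ε ⊆ V :=
    (ball_subset_ball ((min_le_right _ _).trans (min_le_left _ _))).trans hVb
  have hεle : ε ≤ ρ - a := (min_le_right _ _).trans (min_le_right _ _)
  refine ⟨ε, hε, ⟨a, ha⟩, hsub, le_max_right _ _, hε, ?_⟩
  intro x' hx' p hp
  obtain ⟨hpL, hplev, hpb1, hpb2⟩ := hp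
  have hxU : p.1 ∈ U := ballU hpb1
  have hvV : p.2 ∈ V := ballV hpb2
  have hlev : f p.1 < (ρ : EReal) := by
    refine lt_of_lt_of_le hplev ?_
    rw [ha, ← EReal.coe_add]
    exact_mod_cast (by linarith : a + ε ≤ ρ)
  have hmem : p ∈ {p : En n × En n | p.2 ∈ LSubdiff f p.1 ∧ f p.1 < (ρ : EReal)}
      ∩ U ×ˢ V := ⟨⟨hpL, hlev⟩, hxU, hvV⟩
  have hmem' := hmem
  rw [hgraph] at hmem'
  have hLfh : p.2 ∈ LSubdiff fh p.1 := hmem'.1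
  have hfx : f p.1 = fh p.1 := heq p hmem
  rcases eq_or_ne (f p.1) ⊥ with hbot | hbot
  · rw [hbot, EReal.bot_add]; exact bot_le
  · have hnt : f p.1 ≠ ⊤ := ne_top_of_lt hlev
    set b := (f p.1).toReal with hb
    have hfb : f p.1 = (b : EReal) := (EReal.coe_toReal hnt hbot).symm
    have hfhb : fh p.1 = (b : EReal) := by rw [← hfx]; exact hfb
    have hx'U : x' ∈ U := ballU hx'
    have hkey := lsub_global fh s U hUo hUc hconv p.1 hxU b hfhb p.2 hLfh x' hx'U
    have hfin : fh x' ≤ f x' := hle x' hx'U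
    have hmono : ((b + (⟪p.2, x' - p.1⟫ - max (-s) 0 / 2 * ‖x' - p.1‖ ^ 2) : ℝ) : EReal)
        ≤ ((b + ⟪p.2, x' - p.1⟫ + s / 2 * ‖x' - p.1‖ ^ 2 : ℝ) : EReal) := by
      have hm : -s ≤ max (-s) 0 := le_max_left _ _
      have hT : (0:ℝ) ≤ ‖x' - p.1‖ ^ 2 := sq_nonneg _
      exact_mod_cast (by nlinarith : (b + (⟪p.2, x' - p.1⟫ - max (-s) 0 / 2 * ‖x' - p.1‖ ^ 2) : ℝ)
        ≤ b + ⟪p.2, x' - p.1⟫ + s / 2 * ‖x' - p.1‖ ^ 2)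
    calc f p.1 + ((⟪p.2, x' - p.1⟫ - max (-s) 0 / 2 * ‖x' - p.1‖ ^ 2 : ℝ) : EReal)
        = ((b + (⟪p.2, x' - p.1⟫ - max (-s) 0 / 2 * ‖x' - p.1‖ ^ 2) : ℝ) : EReal) := by
          rw [hfb, ← EReal.coe_add]
      _ ≤ ((b + ⟪p.2, x' - p.1⟫ + s / 2 * ‖x' - p.1‖ ^ 2 : ℝ) : EReal) := hmono
      _ ≤ fh x' := hkey
      _ ≤ f x' := hfin

set_option maxHeartbeats 2000000 in
lemma dir2 (f : En n → EReal) (xb xbs : En n) (hf : LowerSemicontinuous f) (r ε : ℝ)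
    (h : ProxReg f xb xbs r ε) : VarConv f (-r) xb xbs := by
  obtain ⟨⟨a, ha⟩, hsub, hr, hε, hineq⟩ := h
  set T := GphT f xb xbs ε with hT
  have hfxbε : f xb + (ε : EReal) = ((a + ε : ℝ) : EReal) := by rw [ha, ← EReal.coe_add]
  have hTxb : (xb, xbs) ∈ T := by
    refine ⟨hsub, ?_, mem_ball_self hε, mem_ball_self hε⟩
    rw [hfxbε, ha]; exact_mod_cast lt_add_of_pos_right a hε
  -- lower bound for f on the ball
  have hlow : ∀ y ∈ ball xb ε,
      ((a + (⟪xbs, y - xb⟫ - r / 2 * ‖y - xb‖ ^ 2) : ℝ) : EReal) ≤ f y := by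
    intro y hy
    have h := hineq y hy (xb, xbs) hTxb
    rwa [ha, ← EReal.coe_add] at h
  have hnbot : ∀ y ∈ ball xb ε, f y ≠ ⊥ := by
    intro y hy hb
    have h2 := hlow y hy
    rw [hb, le_bot_iff] at h2
    exact EReal.coe_ne_bot _ h2
  have hfin : ∀ p ∈ T, f p.1 = (((f p.1).toReal : ℝ) : EReal) :=
    fun p hp => (EReal.coe_toReal (ne_top_of_lt hp.2.1) (hnbot p.1 hp.2.2.1)).symm
  have hlev : ∀ p ∈ T, (f p.1).toReal < a + ε := by
    intro p hp
    have h1 := hp.2.1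
    rw [hfin p hp, hfxbε] at h1
    exact_mod_cast h1
  -- the function g
  set termFn : (En n × En n) → En n → ℝ :=
    fun p x => (f p.1).toReal + ⟪p.2, x - p.1⟫ - r / 2 * ‖x - p.1‖ ^ 2 with htermFn
  set S : En n → Set ℝ := fun x => (fun p => termFn p x) '' T with hS
  have hSne : ∀ x, (S x).Nonempty := fun x => ⟨_, ⟨(xb, xbs), hTxb, rfl⟩⟩
  have hSbdd : ∀ x, BddAbove (S x) := by
    intro x
    refine ⟨(a + ε) + (‖xbs‖ + ε) * (‖x‖ + (‖xb‖ + ε)), ?_⟩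
    rintro t ⟨p, hp, rfl⟩
    have h1 : (f p.1).toReal ≤ a + ε := (hlev p hp).le
    have h2 : ‖p.2‖ ≤ ‖xbs‖ + ε := by
      have := mem_ball_iff_norm.mp hp.2.2.2
      have h4 := norm_add_le xbs (p.2 - xbs)
      simp only [add_sub_cancel] at h4
      linarith
    have h3 : ‖x - p.1‖ ≤ ‖x‖ + (‖xb‖ + ε) := by
      have h5 := norm_sub_le x p.1
      have h6 := mem_ball_iff_norm.mp hp.2.2.1
      have h7 := norm_add_le xb (p.1 - xb)
      simp only [add_sub_cancel] at h7
      linarith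
    have h8 : ⟪p.2, x - p.1⟫ ≤ ‖p.2‖ * ‖x - p.1‖ := real_inner_le_norm _ _
    have h9 : ‖p.2‖ * ‖x - p.1‖ ≤ (‖xbs‖ + ε) * (‖x‖ + (‖xb‖ + ε)) :=
      mul_le_mul h2 h3 (norm_nonneg _) (by positivity)
    have h10 : (0:ℝ) ≤ r / 2 * ‖x - p.1‖ ^ 2 := by positivity
    simp only [htermFn]
    linarith
  set g : En n → ℝ := fun x => sSup (S x) with hg
  have hgle : ∀ p ∈ T, ∀ x, termFn p x ≤ g x :=
    fun p hp x => le_csSup (hSbdd x) ⟨p, hp, rfl⟩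
  have hgub : ∀ x : En n, ∀ b : ℝ, (∀ p ∈ T, termFn p x ≤ b) → g x ≤ b := by
    intro x b hb
    refine csSup_le (hSne x) ?_
    rintro t ⟨p, hp, rfl⟩
    exact hb p hp
  -- g ≤ f on the ε-ball
  have hglef : ∀ y ∈ ball xb ε, ((g y : ℝ) : EReal) ≤ f y := by
    intro y hy
    rcases eq_or_ne (f y) ⊤ with htop | htop
    · rw [htop]; exact le_top
    · have hyb := hnbot y hy
      have hfy : f y = (((f y).toReal : ℝ) : EReal) := (EReal.coe_toReal htop hyb).symm
      rw [hfy, EReal.coe_le_coe_iff]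
      refine hgub y _ ?_
      intro p hp
      have h := hineq y hy p hp
      rw [hfin p hp, ← EReal.coe_add, hfy, EReal.coe_le_coe_iff] at h
      simp only [htermFn]
      linarith
  -- g = f on T
  have hgeq : ∀ p ∈ T, g p.1 = (f p.1).toReal := by
    intro p hp
    refine le_antisymm ?_ ?_
    · have h := hglef p.1 hp.2.2.1
      rw [hfin p hp, EReal.coe_le_coe_iff] at h
      exact h
    · have h := hgle p hp p.1
      simpa [htermFn] using h
  set fh : En n → EReal := fun x => ((g x : ℝ) : EReal) with hfh
  -- lower semicontinuity of fh (in fact continuity not needed)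
  have hlsc : LowerSemicontinuous fh := by
    intro x c hc
    induction c using EReal.rec with
    | bot =>
      filter_upwards with y
      exact bot_lt_iff_ne_bot.mpr (EReal.coe_ne_bot _)
    | coe cr =>
      have hcr : cr < g x := by
        exact_mod_cast (show (cr : EReal) < ((g x : ℝ) : EReal) from hc)
      obtain ⟨t, ⟨p, hp, rfl⟩, hct⟩ := exists_lt_of_lt_csSup (hSne x) hcr
      have hcont : Continuous (termFn p) := by
        simp only [htermFn]
        exact (continuous_const.add (Continuous.inner continuous_const
          (continuous_id.sub continuous_const))).sub
          (continuous_const.mul ((continuous_id.sub continuous_const).norm.pow 2))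
      have hopen : IsOpen {y | cr < termFn p y} := isOpen_lt continuous_const hcont
      filter_upwards [hopen.mem_nhds hct] with y hy
      show (cr : EReal) < ((g y : ℝ) : EReal)
      exact_mod_cast lt_of_lt_of_le hy (hgle p hp y)
    | top => exact absurd hc (not_top_lt)
  -- convexity inequality, globally
  have hconvU : ∀ x y : En n, ∀ a' b' : ℝ, 0 ≤ a' → 0 ≤ b' → a' + b' = 1 →
      fh (a' • x + b' • y) +
        (((-r) / 2 * (a' * ‖x‖ ^ 2 + b' * ‖y‖ ^ 2 - ‖a' • x + b' • y‖ ^ 2) : ℝ) : EReal)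
        ≤ (a' : EReal) * fh x + (b' : EReal) * fh y := by
    intro x y a' b' ha' hb' hab
    set z := a' • x + b' • y with hz
    have hreal : g z + (-r) / 2 * (a' * ‖x‖ ^ 2 + b' * ‖y‖ ^ 2 - ‖z‖ ^ 2)
        ≤ a' * g x + b' * g y := by
      have hmixxy := sq_mix_identity x y a' b' hab
      have hkey : g z ≤ a' * g x + b' * g y + r / 2 * (a' * b' * ‖y - x‖ ^ 2) := by
        refine hgub z _ ?_
        intro p hp
        have hzp : z - p.1 = a' • (x - p.1) + b' • (y - p.1) := by
          have hcomb : a' • (x - p.1) + b' • (y - p.1)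
              = (a' • x + b' • y) - (a' + b') • p.1 := by module
          rw [hcomb, hab, one_smul]
        have hmix := sq_mix_identity (x - p.1) (y - p.1) a' b' hab
        have hyx : (y - p.1) - (x - p.1) = y - x := by abel
        rw [hyx] at hmix
        have hIP : ⟪p.2, z - p.1⟫ = a' * ⟪p.2, x - p.1⟫ + b' * ⟪p.2, y - p.1⟫ := by
          rw [hzp, inner_add_right, inner_smul_right, inner_smul_right]
        have htermid : termFn p z = a' * termFn p x + b' * termFn p y
            + r / 2 * (a' * b' * ‖y - x‖ ^ 2) := by
          simp only [htermFn]
          rw [hIP]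
          have hnz : ‖z - p.1‖ ^ 2 = ‖a' • (x - p.1) + b' • (y - p.1)‖ ^ 2 := by rw [hzp]
          rw [hnz]
          linear_combination ((r : ℝ)/2) * hmix - (f p.1).toReal * hab
        rw [htermid]
        have h1 : a' * termFn p x ≤ a' * g x :=
          mul_le_mul_of_nonneg_left (hgle p hp x) ha'
        have h2 : b' * termFn p y ≤ b' * g y :=
          mul_le_mul_of_nonneg_left (hgle p hp y) hb'
        exact add_le_add (add_le_add h1 h2) le_rfl
      rw [hmixxy]
      linarith
    calc fh z + (((-r) / 2 * (a' * ‖x‖ ^ 2 + b' * ‖y‖ ^ 2 - ‖z‖ ^ 2) : ℝ) : EReal)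
        = ((g z + (-r) / 2 * (a' * ‖x‖ ^ 2 + b' * ‖y‖ ^ 2 - ‖z‖ ^ 2) : ℝ) : EReal) := by
          rw [← EReal.coe_add]
      _ ≤ ((a' * g x + b' * g y : ℝ) : EReal) := by exact_mod_cast hreal
      _ = (a' : EReal) * fh x + (b' : EReal) * fh y := by
          rw [← EReal.coe_mul, ← EReal.coe_mul, ← EReal.coe_add]
  -- constants
  set M : ℝ := ‖xbs‖ + 1 with hM
  have hM1 : (1:ℝ) ≤ M := le_add_of_nonneg_left (norm_nonneg _)
  have hM0 : (0:ℝ) < M := by linarith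
  set lam : ℝ := min (1/(2*r+2)) (ε/(2*M^2)) with hlamdef
  have hlam0 : 0 < lam := lt_min (by positivity) (by positivity)
  have hlamr : lam * r ≤ 1/2 := by
    have h1 : lam ≤ 1/(2*r+2) := min_le_left _ _
    have h2 : lam * r ≤ 1/(2*r+2) * r := mul_le_mul_of_nonneg_right h1 hr
    have h3 : 1/(2*r+2) * r ≤ 1/2 := by
      rw [div_mul_eq_mul_div, div_le_div_iff₀ (by linarith) (by norm_num)]
      nlinarith
    linarith
  have hlam1 : lam ≤ 1 := by
    have h1 : lam ≤ 1/(2*r+2) := min_le_left _ _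
    have h2 : 1/(2*r+2) ≤ 1 := by rw [div_le_one (by linarith)]; linarith
    linarith
  have hlamM : lam * M^2 / 2 ≤ ε/4 := by
    have h1 : lam ≤ ε/(2*M^2) := min_le_right _ _
    have h2 : lam * M^2 ≤ ε/(2*M^2) * M^2 := mul_le_mul_of_nonneg_right h1 (by positivity)
    have h3 : ε/(2*M^2) * M^2 = ε/2 := by field_simp
    linarith
  set ε₁ : ℝ := min 1 (min (ε/32) (min (lam*ε/20) (ε/(8*M)))) with hε₁def
  have hε₁0 : 0 < ε₁ :=
    lt_min one_pos (lt_min (by positivity) (lt_min (by positivity) (by positivity)))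
  have hε₁a : ε₁ ≤ 1 := min_le_left _ _
  have hε₁b : ε₁ ≤ ε/32 := (min_le_right _ _).trans (min_le_left _ _)
  have hε₁c : ε₁ ≤ lam*ε/20 :=
    (min_le_right _ _).trans ((min_le_right _ _).trans (min_le_left _ _))
  have hε₁d : ε₁ ≤ ε/(8*M) :=
    (min_le_right _ _).trans ((min_le_right _ _).trans (min_le_right _ _))
  have hε₁ε : ε₁ ≤ ε := by linarith
  -- the central claim
  have hbig : ∀ x v : En n, x ∈ ball xb ε₁ → v ∈ ball xbs ε₁ → v ∈ LSubdiff fh x →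
      v ∈ LSubdiff f x ∧ f x < ((a + ε : ℝ) : EReal) := by
    intro x v hq1 hq2 hqL
    have hglobal : ∀ y, g x + ⟪v, y - x⟫ - r/2*‖y - x‖^2 ≤ g y := by
      intro y
      have hA := lsub_global fh (-r) Set.univ isOpen_univ convex_univ
        (fun x' _ y' _ a' b' ha' hb' hab => hconvU x' y' a' b' ha' hb' hab)
        x (Set.mem_univ x) (g x) rfl v hqL y (Set.mem_univ y)
      have hA2 : ((g x + ⟪v, y - x⟫ + (-r)/2*‖y - x‖^2 : ℝ) : EReal)
          ≤ ((g y : ℝ) : EReal) := hA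
      have hA' : g x + ⟪v, y - x⟫ + (-r)/2*‖y - x‖^2 ≤ g y := by
        exact_mod_cast hA2
      linarith
    set z := x + lam • v with hzdef
    set Q : En n → ℝ := fun y => 1/(2*lam)*‖y - z‖^2 with hQ
    set φ : En n → EReal := fun y => f y + ((Q y : ℝ) : EReal) with hφ
    have hφlsc : LowerSemicontinuous φ := by
      intro y
      refine LowerSemicontinuousAt.add' (hf y) ?_ ?_
      · have hQc : Continuous Q := by
          simp only [hQ]
          exact continuous_const.mul ((continuous_id.sub continuous_const).norm.pow 2)
        exact ((continuous_coe_real_ereal.comp hQc).lowerSemicontinuous) y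
      · exact EReal.continuousAt_add (Or.inr (EReal.coe_ne_bot _)) (Or.inr (EReal.coe_ne_top _))
    obtain ⟨y₀, hy₀K, hy₀min⟩ := lsc_exists_min φ hφlsc (closedBall xb (ε/2))
      (isCompact_closedBall xb (ε/2)) ⟨xb, mem_closedBall_self (by linarith)⟩
    have hKball : closedBall xb (ε/2) ⊆ ball xb ε := closedBall_subset_ball (by linarith)
    have hy₀ε : y₀ ∈ ball xb ε := hKball hy₀K
    have hy₀nb : f y₀ ≠ ⊥ := hnbot y₀ hy₀ε
    have hup : f y₀ + ((Q y₀ : ℝ) : EReal) ≤ ((a + Q xb : ℝ) : EReal) := by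
      calc f y₀ + ((Q y₀ : ℝ) : EReal) = φ y₀ := rfl
        _ ≤ φ xb := hy₀min xb (mem_closedBall_self (by linarith))
        _ = ((a + Q xb : ℝ) : EReal) := by
            show f xb + ((Q xb : ℝ) : EReal) = _
            rw [ha, ← EReal.coe_add]
    have hy₀nt : f y₀ ≠ ⊤ := by
      intro htp
      rw [htp, EReal.top_add_coe] at hup
      exact EReal.coe_ne_top _ (top_le_iff.mp hup)
    set b₀ := (f y₀).toReal with hb₀def
    have hb₀ : f y₀ = ((b₀ : ℝ) : EReal) := (EReal.coe_toReal hy₀nt hy₀nb).symm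
    have hupper : b₀ + Q y₀ ≤ a + Q xb := by
      rw [hb₀, ← EReal.coe_add] at hup
      exact_mod_cast hup
    have hlower : a + (⟪xbs, y₀ - xb⟫ - r/2*‖y₀ - xb‖^2) ≤ b₀ := by
      have h := hlow y₀ hy₀ε
      rw [hb₀] at h
      exact_mod_cast h
    have hxball : ‖x - xb‖ < ε₁ := mem_ball_iff_norm.mp hq1
    have hvball : ‖v - xbs‖ < ε₁ := mem_ball_iff_norm.mp hq2
    have hQdiff : 2*lam*(Q y₀ - Q xb) = ‖y₀ - xb‖^2 - 2*⟪y₀ - xb, z - xb⟫ := by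
      simp only [hQ]
      have e1 : y₀ - z = (y₀ - xb) - (z - xb) := by abel
      have e2 : xb - z = -(z - xb) := by abel
      rw [e1, e2, norm_sub_sq_real, norm_neg]
      field_simp
      ring
    have hinner1 : ⟪y₀ - xb, z - xb - lam • xbs⟫ ≤ ‖y₀ - xb‖ * (2*ε₁) := by
      have e3 : z - xb - lam • xbs = (x - xb) + lam • (v - xbs) := by
        simp only [hzdef]; module
      rw [e3]
      calc ⟪y₀ - xb, (x - xb) + lam • (v - xbs)⟫
          ≤ ‖y₀ - xb‖ * ‖(x - xb) + lam • (v - xbs)‖ := real_inner_le_norm _ _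
        _ ≤ ‖y₀ - xb‖ * (2*ε₁) := by
            refine mul_le_mul_of_nonneg_left ?_ (norm_nonneg _)
            have h4 := norm_add_le (x - xb) (lam • (v - xbs))
            rw [norm_smul, Real.norm_eq_abs, abs_of_pos hlam0] at h4
            have h5 : lam * ‖v - xbs‖ ≤ lam * ε₁ :=
              mul_le_mul_of_nonneg_left hvball.le hlam0.le
            nlinarith
    have hmono : (1 - lam*r)*‖y₀ - xb‖^2 ≤ 2*⟪y₀ - xb, z - xb - lam • xbs⟫ := by
      have hIs : ⟪y₀ - xb, z - xb - lam • xbs⟫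
          = ⟪y₀ - xb, z - xb⟫ - lam * ⟪xbs, y₀ - xb⟫ := by
        rw [inner_sub_right, real_inner_smul_right, real_inner_comm (y₀ - xb) xbs]
      have e4 : Q y₀ - Q xb ≤ -(⟪xbs, y₀ - xb⟫ - r/2*‖y₀ - xb‖^2) := by linarith
      have e5 : 2*lam*(Q y₀ - Q xb) ≤ 2*lam*(-(⟪xbs, y₀ - xb⟫ - r/2*‖y₀ - xb‖^2)) :=
        mul_le_mul_of_nonneg_left e4 (by positivity)
      rw [hQdiff] at e5
      rw [hIs]
      nlinarith [e5]
    have hu8 : ‖y₀ - xb‖ ≤ 8*ε₁ := by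
      rcases eq_or_lt_of_le (norm_nonneg (y₀ - xb)) with h0 | hpos
      · rw [← h0]; positivity
      · nlinarith [hmono, hinner1, hpos]
    have hu4 : ‖y₀ - xb‖ ≤ ε/4 := by linarith
    have hvM : ‖v‖ ≤ M := by
      have h6 := norm_add_le xbs (v - xbs)
      simp only [add_sub_cancel] at h6
      simp only [hM]
      linarith
    have hdnorm : ‖z - xb‖ ≤ ε₁ + lam*M := by
      have e6 : z - xb = (x - xb) + lam • v := by simp only [hzdef]; module
      rw [e6]
      have h7 := norm_add_le (x - xb) (lam • v)
      rw [norm_smul, Real.norm_eq_abs, abs_of_pos hlam0] at h7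
      have h8 : lam * ‖v‖ ≤ lam * M := mul_le_mul_of_nonneg_left hvM hlam0.le
      linarith
    have hQxb : Q xb ≤ 2/5*ε := by
      have h9 : ‖xb - z‖^2 ≤ (ε₁ + lam*M)^2 := by
        rw [norm_sub_rev xb z]
        nlinarith [hdnorm, norm_nonneg (z - xb)]
      have expand : 1/(2*lam)*(ε₁ + lam*M)^2 = ε₁^2/(2*lam) + ε₁*M + lam*M^2/2 := by
        field_simp; ring
      have hb1 : ε₁^2/(2*lam) ≤ ε/40 := by
        rw [div_le_iff₀ (by positivity)]
        nlinarith [hε₁c, hε₁a, hε₁0]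
      have hb2 : ε₁*M ≤ ε/8 := by
        calc ε₁*M ≤ ε/(8*M)*M := mul_le_mul_of_nonneg_right hε₁d hM0.le
          _ = ε/8 := by field_simp
      have h10 : 1/(2*lam)*‖xb - z‖^2 ≤ 1/(2*lam)*(ε₁ + lam*M)^2 :=
        mul_le_mul_of_nonneg_left h9 (by positivity)
      have : Q xb = 1/(2*lam)*‖xb - z‖^2 := rfl
      rw [this]
      linarith
    have hQy₀ : 0 ≤ Q y₀ := by
      have : Q y₀ = 1/(2*lam)*‖y₀ - z‖^2 := rfl
      rw [this]; positivity
    have hb₀up : b₀ ≤ a + 2/5*ε := by linarith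
    set w := (lam)⁻¹ • (z - y₀) with hwdef
    have hlamw : lam • w = z - y₀ := by rw [hwdef, smul_inv_smul₀ (ne_of_gt hlam0)]
    have hwF : w ∈ FSubdiff f y₀ := by
      intro c hc
      refine ⟨min (ε/4) (2*lam*c), lt_min (by positivity) (by positivity), ?_⟩
      intro y hy
      have hyy₀ : ‖y - y₀‖ < ε/4 :=
        lt_of_lt_of_le (mem_ball_iff_norm.mp hy) (min_le_left _ _)
      have hyK : y ∈ closedBall xb (ε/2) := by
        rw [mem_closedBall_iff_norm]
        have h11 : ‖y - xb‖ ≤ ‖y - y₀‖ + ‖y₀ - xb‖ := by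
          rw [show y - xb = (y - y₀) + (y₀ - xb) by abel]
          exact norm_add_le _ _
        linarith
      have hmin2 := hy₀min y hyK
      rcases eq_or_ne (f y) ⊤ with htp | htp
      · rw [htp]; exact le_top
      · have hynb : f y ≠ ⊥ := hnbot y (hKball hyK)
        set cy := (f y).toReal with hcydef
        have hcy : f y = ((cy : ℝ) : EReal) := (EReal.coe_toReal htp hynb).symm
        have hminr : b₀ + Q y₀ ≤ cy + Q y := by
          have h12 : f y₀ + ((Q y₀ : ℝ) : EReal) ≤ f y + ((Q y : ℝ) : EReal) := hmin2
          rw [hb₀, hcy, ← EReal.coe_add, ← EReal.coe_add] at h12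
          exact_mod_cast h12
        have e5 : ‖y - z‖^2 = ‖y₀ - z‖^2 + 2*⟪y₀ - z, y - y₀⟫ + ‖y - y₀‖^2 := by
          rw [show y - z = (y₀ - z) + (y - y₀) by abel, norm_add_sq_real]
        have e6 : ⟪w, y - y₀⟫ = -(1/lam)*⟪y₀ - z, y - y₀⟫ := by
          rw [hwdef, real_inner_smul_left, show z - y₀ = -(y₀ - z) by abel, inner_neg_left]
          field_simp
        rw [hb₀, hcy, ← EReal.coe_add, EReal.coe_le_coe_iff]
        have hq2 : 1/(2*lam)*‖y - y₀‖^2 ≤ c*‖y - y₀‖ := by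
          have h13 : ‖y - y₀‖ ≤ 2*lam*c :=
            le_of_lt (lt_of_lt_of_le (mem_ball_iff_norm.mp hy) (min_le_right _ _))
          have h14 : ‖y - y₀‖*‖y - y₀‖ ≤ ‖y - y₀‖*(2*lam*c) :=
            mul_le_mul_of_nonneg_left h13 (norm_nonneg _)
          have h15 : 1/(2*lam)*(‖y - y₀‖*(2*lam*c)) = c*‖y - y₀‖ := by field_simp
          calc 1/(2*lam)*‖y - y₀‖^2 = 1/(2*lam)*(‖y - y₀‖*‖y - y₀‖) := by ring
            _ ≤ 1/(2*lam)*(‖y - y₀‖*(2*lam*c)) :=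
                mul_le_mul_of_nonneg_left h14 (by positivity)
            _ = c*‖y - y₀‖ := h15
        have hQyy : Q y - Q y₀ = 1/(2*lam)*(2*⟪y₀ - z, y - y₀⟫) + 1/(2*lam)*‖y - y₀‖^2 := by
          show 1/(2*lam)*‖y - z‖^2 - 1/(2*lam)*‖y₀ - z‖^2 = _
          rw [e5]; ring
        have e7 : 1/(2*lam)*(2*⟪y₀ - z, y - y₀⟫) = -⟪w, y - y₀⟫ := by
          rw [e6]; field_simp
        have e8 : Q y - Q y₀ = -⟪w, y - y₀⟫ + 1/(2*lam)*‖y - y₀‖^2 := by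
          rw [hQyy, e7]
        linarith
    have hy₀T : (y₀, w) ∈ T := by
      refine ⟨fsub_subset_lsub f y₀ hwF, ?_, hy₀ε, ?_⟩
      · show f y₀ < f xb + (ε : EReal)
        rw [hb₀, hfxbε]
        exact_mod_cast (by linarith : b₀ < a + ε)
      · rw [mem_ball_iff_norm]
        have einv : (lam)⁻¹ • (lam • xbs) = xbs := inv_smul_smul₀ (ne_of_gt hlam0) xbs
        have e9 : w - xbs = (lam)⁻¹ • (z - y₀ - lam • xbs) := by
          rw [hwdef, smul_sub lam⁻¹ (z - y₀) (lam • xbs), inv_smul_smul₀ (ne_of_gt hlam0)]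
        have e10 : z - y₀ - lam • xbs = (x - xb) + lam • (v - xbs) - (y₀ - xb) := by
          simp only [hzdef]; module
        have hnormbound : ‖z - y₀ - lam • xbs‖ ≤ 10*ε₁ := by
          rw [e10]
          have h16 := norm_sub_le ((x - xb) + lam • (v - xbs)) (y₀ - xb)
          have h17 := norm_add_le (x - xb) (lam • (v - xbs))
          rw [norm_smul, Real.norm_eq_abs, abs_of_pos hlam0] at h17
          have h18 : lam * ‖v - xbs‖ ≤ ε₁ := by nlinarith [hvball.le, hlam0.le]
          linarith
        rw [e9, norm_smul, Real.norm_eq_abs, abs_of_pos (inv_pos.mpr hlam0)]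
        have h19 : lam⁻¹ * ‖z - y₀ - lam • xbs‖ ≤ lam⁻¹ * (10*ε₁) :=
          mul_le_mul_of_nonneg_left hnormbound (by positivity)
        have h20 : lam⁻¹ * (10*ε₁) ≤ ε/2 := by
          rw [inv_mul_le_iff₀ hlam0]
          nlinarith [hε₁c]
        linarith
    have hgy₀ : g y₀ = b₀ := hgeq (y₀, w) hy₀T
    have hterm2 := hgle (y₀, w) hy₀T x
    have hglob2 := hglobal y₀
    have hxy : x - y₀ = lam • (w - v) := by
      have e11 : x - y₀ = (z - y₀) - lam • v := by simp only [hzdef]; module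
      rw [e11, ← hlamw, ← smul_sub]
    have hwv : w = v := by
      have hnorm1 : ‖y₀ - x‖ = ‖x - y₀‖ := norm_sub_rev _ _
      have hIPsplit : ⟪w, x - y₀⟫ + ⟪v, y₀ - x⟫ = ⟪w - v, x - y₀⟫ := by
        rw [inner_sub_left, show y₀ - x = -(x - y₀) by abel, inner_neg_right]
        ring
      have hterm2' : b₀ + ⟪w, x - y₀⟫ - r/2*‖x - y₀‖^2 ≤ g x := by
        have h21 : termFn (y₀, w) x = b₀ + ⟪w, x - y₀⟫ - r/2*‖x - y₀‖^2 := by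
          simp only [htermFn]
          rw [hb₀def]
        rw [h21] at hterm2
        exact hterm2
      have hIP2 : ⟪w - v, x - y₀⟫ ≤ r * ‖x - y₀‖^2 := by
        rw [hgy₀, hnorm1] at hglob2
        linarith
      rw [hxy] at hIP2
      have e12 : ⟪w - v, lam • (w - v)⟫ = lam*‖w - v‖^2 := by
        rw [real_inner_smul_right, real_inner_self_eq_norm_sq]
      have e13 : ‖lam • (w - v)‖^2 = lam^2*‖w - v‖^2 := by
        rw [norm_smul, Real.norm_eq_abs, mul_pow, sq_abs]
      rw [e12, e13] at hIP2
      have hco : 0 < lam*(1 - lam*r) := by nlinarith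
      have hT0 : ‖w - v‖^2 ≤ 0 := by
        by_contra hT
        push_neg at hT
        nlinarith [hIP2, mul_pos hco hT]
      have h22 : ‖w - v‖^2 = 0 := le_antisymm hT0 (sq_nonneg _)
      have h23 : ‖w - v‖ = 0 := by
        have := sq_eq_zero_iff.mp h22
        exact this
      exact sub_eq_zero.mp (norm_eq_zero.mp h23)
    have hxy0 : y₀ = x := by
      rw [hwv, sub_self, smul_zero] at hxy
      have := sub_eq_zero.mp hxy
      exact this.symm
    constructor
    · rw [← hxy0, ← hwv]
      exact hy₀T.1
    · rw [← hxy0, hb₀]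
      exact_mod_cast (by linarith : b₀ < a + ε)
  -- assemble the VarConv certificate
  refine ⟨⟨a, ha⟩, hsub, ball xb ε₁, ball xbs ε₁, fh, a + ε, isOpen_ball, convex_ball _ _,
    mem_ball_self hε₁0, isOpen_ball, convex_ball _ _, mem_ball_self hε₁0, hlsc,
    by rw [ha]; exact_mod_cast lt_add_of_pos_right a hε,
    fun x _ y _ a' b' ha' hb' hab => hconvU x y a' b' ha' hb' hab,
    fun x hx => hglef x (ball_subset_ball hε₁ε hx), ?_, ?_⟩
  · ext p
    simp only [Set.mem_inter_iff, Set.mem_setOf_eq, Set.mem_prod]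
    constructor
    · rintro ⟨⟨hpL, hplev⟩, hpU, hpV⟩
      have hpT : p ∈ T := ⟨hpL, by rw [hfxbε]; exact hplev,
        ball_subset_ball hε₁ε hpU, ball_subset_ball hε₁ε hpV⟩
      refine ⟨?_, hpU, hpV⟩
      apply fsub_subset_lsub
      intro c hc
      refine ⟨min 1 (2*c/(r+1)), lt_min one_pos (by positivity), ?_⟩
      intro y hy
      have hterm := hgle p hpT y
      show ((g p.1 : ℝ) : EReal) + ((⟪p.2, y - p.1⟫ - c * ‖y - p.1‖ : ℝ) : EReal)
        ≤ ((g y : ℝ) : EReal)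
      rw [← EReal.coe_add, EReal.coe_le_coe_iff]
      have hgp : g p.1 = (f p.1).toReal := hgeq p hpT
      have hn : ‖y - p.1‖ < min 1 (2*c/(r+1)) := mem_ball_iff_norm.mp hy
      have hq : r/2 * ‖y - p.1‖^2 ≤ c * ‖y - p.1‖ := by
        have h1 : ‖y - p.1‖ ≤ 2*c/(r+1) := le_of_lt (hn.trans_le (min_le_right _ _))
        have h5 : r * (2*c/(r+1)) ≤ 2*c := by
          rw [mul_div_assoc']
          rw [div_le_iff₀ (by linarith : (0:ℝ) < r + 1)]
          nlinarith
        have h6 : r * ‖y - p.1‖ ≤ 2*c :=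
          le_trans (mul_le_mul_of_nonneg_left h1 hr) h5
        nlinarith [mul_le_mul_of_nonneg_right h6 (norm_nonneg (y - p.1))]
      have hterm' : termFn p y ≤ g y := hterm
      simp only [htermFn] at hterm'
      rw [hgp]
      linarith
    · rintro ⟨hpfh, hpU, hpV⟩
      obtain ⟨hL, hlt⟩ := hbig p.1 p.2 hpU hpV hpfh
      exact ⟨⟨hL, hlt⟩, hpU, hpV⟩
  · rintro p ⟨⟨hpL, hplev⟩, hpU, hpV⟩
    have hpT : p ∈ T := ⟨hpL, by rw [hfxbε]; exact hplev,
      ball_subset_ball hε₁ε hpU, ball_subset_ball hε₁ε hpV⟩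
    rw [hfin p hpT]
    show _ = ((g p.1 : ℝ) : EReal)
    rw [hgeq p hpT]

theorem stmt9 (f : En n → EReal) (xb xbs : En n) (hf : LowerSemicontinuous f) :
    (∀ s : ℝ, VarConv f s xb xbs →
      ∃ ε > (0:ℝ), ProxReg f xb xbs (max (-s) 0) ε) ∧
    (∀ r ε : ℝ, ProxReg f xb xbs r ε → VarConv f (-r) xb xbs) := by
  exact ⟨fun s hs => dir1 f xb xbs s hs, fun r ε h => dir2 f xb xbs hf r ε h⟩
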